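/- arXiv:math/0703262 — 7 statements merged into one kernel-verified Lean document; each statement's English description precedes it below -/
import Mathlib

section
/- For every n ≥ 1, the length of the list L_n equals the n-th Catalan number C_n. -/
def lastD (w : List Nat) : Nat := w.getLastD 0

/-- Shifted production for the Catalan rule:
`sC k 2 = [2, k+1, k, ..., 3]` and, for `3 ≤ i ≤ k+1`,
`sC k i = [i, i+1, ..., k+1, 2, 3, ..., i-1]`. -/
def sC (k i : Nat) : List Nat :=
  if i = 2 then 2 :: (List.range (k - 1)).map (fun t => k + 1 - t)
  else (List.range (k + 2 - i)).map (fun t => i + t) ++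
       (List.range (i - 2)).map (fun t => 2 + t)

/-- Builds the sublists `L_n^i` from the previous level, carrying the
starting digit of the next shifted production. -/
def graySubsAux : Nat → List (List Nat) → List (List (List Nat))
  | _, [] => []
  | j, w :: ws =>
    let sub := (sC (lastD w) j).map (fun d => w ++ [d])
    sub :: graySubsAux (lastD (sub.getLastD [])) ws

def graySubs (prev : List (List Nat)) : List (List (List Nat)) :=
  graySubsAux 2 prev

/-- The Gray code list `L_n` for the Catalan succession rule. -/
def grayL : Nat → List (List Nat)
  | 0 => []
  | 1 => [[2]]
  | n + 2 => (graySubs (grayL (n + 1))).flatten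

def lab : Nat → List Nat
  | 0 => []
  | 1 => [2]
  | n + 2 => (lab (n + 1)).flatMap (fun k => (List.range k).map (fun d => 2 + d))

lemma lab_mem : ∀ n, 1 ≤ n → ∀ k ∈ lab n, 2 ≤ k ∧ k ≤ n + 1 := by
  intro n
  induction n with
  | zero => omega
  | succ m ih =>
    intro _ k hk
    match m, hk with
    | 0, hk => simp [lab] at hk; omega
    | m + 1, hk =>
      simp only [lab, List.mem_flatMap, List.mem_map, List.mem_range] at hk
      obtain ⟨a, ha, d, hd, rfl⟩ := hk
      have := ih (by omega) a ha
      omega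

lemma perm_aux : ∀ (n a : Nat), ((List.range n).map (fun t => a + n - t)).Perm
    ((List.range n).map (fun t => a + 1 + t)) := by
  intro n
  induction n with
  | zero => simp
  | succ m ih =>
    intro a
    have h1 : (List.range (m+1)).map (fun t => a + (m+1) - t)
        = (List.range m).map (fun t => (a+1) + m - t) ++ [a + 1] := by
      rw [List.range_succ, List.map_append]
      congr 1
      · exact List.map_congr_left (fun t ht => by
          have := List.mem_range.mp ht; omega)
      · simp; omega
    rw [h1]
    refine (List.perm_append_singleton _ _).trans ?_
    rw [List.range_succ_eq_map, List.map_cons, List.map_map]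
    have e : ((List.range m).map ((fun t => a+1+t) ∘ Nat.succ))
        = (List.range m).map (fun t => (a+1)+1+t) :=
      List.map_congr_left (fun t _ => by simp [Function.comp]; omega)
    rw [e]
    simpa using (ih (a+1)).cons (a+1)


-- canonical production
def canon (k : Nat) : List Nat := (List.range k).map (fun d => 2 + d)

lemma canon_eq (k : Nat) (hk : 1 ≤ k) :
    canon k = 2 :: (List.range (k-1)).map (fun t => 3 + t) := by
  obtain ⟨m, rfl⟩ : ∃ m, k = m + 1 := ⟨k - 1, by omega⟩
  simp only [canon, List.range_succ_eq_map, List.map_cons, List.map_map, Nat.add_zero,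
    Nat.add_succ_sub_one]
  congr 1
  exact List.map_congr_left (fun t _ => by simp [Function.comp]; omega)

lemma sC2_eq (k : Nat) : sC k 2 = 2 :: (List.range (k - 1)).map (fun t => k + 1 - t) := by
  simp [sC]

lemma sC3_eq (k : Nat) (hk : 2 ≤ k) :
    sC k 3 = (List.range (k - 1)).map (fun t => 3 + t) ++ [2] := by
  have h1 : k + 2 - 3 = k - 1 := by omega
  simp [sC, h1, List.range_succ]

lemma sC_perm (k j : Nat) (hk : 2 ≤ k) (hj : j = 2 ∨ j = 3) :
    (sC k j).Perm (canon k) := by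
  rcases hj with rfl | rfl
  · rw [sC2_eq, canon_eq k (by omega)]
    refine List.Perm.cons 2 ?_
    have e : (List.range (k-1)).map (fun t => k + 1 - t)
        = (List.range (k-1)).map (fun t => 2 + (k-1) - t) :=
      List.map_congr_left (fun t _ => by omega)
    rw [e]
    exact perm_aux (k-1) 2
  · rw [sC3_eq k hk, canon_eq k (by omega)]
    exact List.perm_append_singleton _ _

lemma sC_length (k j : Nat) (hk : 2 ≤ k) (hj : j = 2 ∨ j = 3) : (sC k j).length = k := by
  rw [(sC_perm k j hk hj).length_eq]
  simp [canon]

lemma sC_last2 (k : Nat) (hk : 2 ≤ k) : (sC k 2).getLastD 0 = 3 := by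
  rw [sC2_eq]
  obtain ⟨m, hm⟩ : ∃ m, k - 1 = m + 1 := ⟨k - 2, by omega⟩
  rw [hm, List.range_succ, List.map_append]
  have : (2 : Nat) :: ((List.range m).map (fun t => k + 1 - t) ++ [k + 1 - m]) =
      (2 :: (List.range m).map (fun t => k + 1 - t)) ++ [k + 1 - m] := by rfl
  simp only [List.map_cons, List.map_nil, this, List.getLastD_concat]
  omega

lemma sC_last3 (k : Nat) (hk : 2 ≤ k) : (sC k 3).getLastD 0 = 2 := by
  rw [sC3_eq k hk, List.getLastD_concat]

lemma sC_ne_nil (k j : Nat) (hk : 2 ≤ k) (hj : j = 2 ∨ j = 3) : sC k j ≠ [] := by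
  intro h
  have := sC_length k j hk hj
  rw [h] at this
  simp at this
  omega


lemma map_lastD_sub (w : List Nat) (l : List Nat) :
    (l.map (fun d => w ++ [d])).map lastD = l := by
  rw [List.map_map]
  have : (lastD ∘ fun d => w ++ [d]) = id := by
    funext d; simp [lastD, Function.comp, List.getLastD_concat]
  rw [this, List.map_id]

lemma sub_last (w : List Nat) (l : List Nat) (hl : l ≠ []) :
    lastD ((l.map (fun d => w ++ [d])).getLastD []) = l.getLastD 0 := by
  rcases List.eq_nil_or_concat l with rfl | ⟨L, b, rfl⟩
  · exact absurd rfl hl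
  · simp only [List.concat_eq_append, List.map_append, List.map_cons, List.map_nil,
      List.getLastD_concat]
    simp [lastD, List.getLastD_concat]

lemma aux_perm : ∀ (ws : List (List Nat)) (j : Nat), (j = 2 ∨ j = 3) →
    (∀ w ∈ ws, 2 ≤ lastD w) →
    (((graySubsAux j ws).flatten).map lastD).Perm (ws.flatMap (fun w => canon (lastD w))) := by
  intro ws
  induction ws with
  | nil => intro j _ _; simp [graySubsAux]
  | cons w ws ih =>
    intro j hj hws
    have hk : 2 ≤ lastD w := hws w (List.mem_cons_self (a := w) (l := ws))
    simp only [graySubsAux, List.flatten_cons, List.flatMap_cons, List.map_append]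
    refine List.Perm.append ?_ ?_
    · rw [map_lastD_sub]
      exact sC_perm (lastD w) j hk hj
    · have hnext : lastD (((sC (lastD w) j).map (fun d => w ++ [d])).getLastD []) = 2 ∨
          lastD (((sC (lastD w) j).map (fun d => w ++ [d])).getLastD []) = 3 := by
        rw [sub_last w _ (sC_ne_nil (lastD w) j hk hj)]
        rcases hj with rfl | rfl
        · right; exact sC_last2 _ hk
        · left; exact sC_last3 _ hk
      exact ih _ hnext (fun v hv => hws v (List.mem_cons_of_mem w hv))

lemma grayL_perm : ∀ n, 1 ≤ n → ((grayL n).map lastD).Perm (lab n) := by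
  intro n
  induction n with
  | zero => omega
  | succ m ih =>
    intro _
    match m with
    | 0 => simp [grayL, lab, lastD]
    | m + 1 =>
      have ihm := ih (by omega)
      have hws : ∀ w ∈ grayL (m + 1), 2 ≤ lastD w := by
        intro w hw
        have : lastD w ∈ lab (m + 1) := ihm.mem_iff.mp (List.mem_map_of_mem (f := lastD) hw)
        exact (lab_mem (m+1) (by omega) _ this).1
      have h1 := aux_perm (grayL (m + 1)) 2 (Or.inl rfl) hws
      have h2 : (grayL (m+1)).flatMap (fun w => canon (lastD w))
          = ((grayL (m+1)).map lastD).flatMap canon := by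
        rw [List.flatMap_map]
      have h3 : (((grayL (m+1)).map lastD).flatMap canon).Perm ((lab (m+1)).flatMap canon) :=
        ihm.flatMap_right canon
      show ((grayL (m+2)).map lastD).Perm (lab (m+2))
      have : grayL (m+2) = (graySubsAux 2 (grayL (m+1))).flatten := rfl
      rw [this]
      refine h1.trans ?_
      rw [h2]
      refine h3.trans ?_
      rfl


def T (n j : Nat) : Nat := (lab n).countP (fun k => decide (j ≤ k))

-- vanishing above the diagonal
lemma T_zero {n j : Nat} (h : n + 2 ≤ j) : T n j = 0 := by
  match n with
  | 0 => simp [T, lab]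
  | n + 1 =>
    rw [T, List.countP_eq_zero]
    intro k hk
    have := lab_mem (n+1) (by omega) k hk
    simp only [decide_eq_true_eq]
    omega

lemma T_one (n : Nat) (hn : 1 ≤ n) : T n 1 = T n 2 := by
  rw [T, T, List.countP_eq_length.mpr, List.countP_eq_length.mpr]
  · intro k hk; have := lab_mem n hn k hk; simp; omega
  · intro k hk; have := lab_mem n hn k hk; simp; omega

lemma countP_canon (j k : Nat) (hj : 2 ≤ j) :
    (canon k).countP (fun x => decide (j ≤ x)) = k + 2 - j := by
  induction k with
  | zero => simp [canon]; omega
  | succ m ih =>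
    rw [canon, List.range_succ, List.map_append, List.countP_append]
    rw [show (List.range m).map (fun d => 2 + d) = canon m from rfl, ih]
    simp only [List.map_cons, List.map_nil, List.countP_cons, List.countP_nil]
    split <;> rename_i h <;> simp_all <;> omega

lemma list_sum_eq (l : List Nat) (j B : Nat) (hj : 2 ≤ j) (hB : ∀ k ∈ l, k ≤ B) :
    (l.map (fun k => k + 2 - j)).sum
      = ∑ i ∈ Finset.Icc (j - 1) B, l.countP (fun x => decide (i ≤ x)) := by
  induction l with
  | nil => simp
  | cons k l ih =>
    have hkB : k ≤ B := hB k (List.mem_cons_self (a := k) (l := l))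
    rw [List.map_cons, List.sum_cons, ih (fun x hx => hB x (List.mem_cons_of_mem k hx))]
    simp only [List.countP_cons]
    rw [Finset.sum_add_distrib]
    have : (∑ i ∈ Finset.Icc (j-1) B, if (decide (i ≤ k)) = true then 1 else 0)
        = ((Finset.Icc (j-1) B).filter (fun i => i ≤ k)).card := by
      rw [Finset.sum_boole]; simp
    rw [this]
    have hfil : (Finset.Icc (j-1) B).filter (fun i => i ≤ k) = Finset.Icc (j-1) (min B k) := by
      ext x; simp [Finset.mem_Icc]; omega
    rw [hfil, Nat.card_Icc]
    omega

-- the level recurrence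
lemma K1 (n j : Nat) (hn : 1 ≤ n) (hj : 2 ≤ j) :
    T (n + 1) j = ∑ i ∈ Finset.Icc (j - 1) (n + 1), T n i := by
  obtain ⟨m, rfl⟩ : ∃ m, n = m + 1 := ⟨n - 1, by omega⟩
  rw [T, show lab (m + 2) = (lab (m+1)).flatMap (fun k => canon k) from rfl]
  rw [List.flatMap, List.countP_flatten, List.map_map]
  have e1 : ((lab (m+1)).map ((List.countP fun x => decide (j ≤ x)) ∘ fun k => canon k))
      = (lab (m+1)).map (fun k => k + 2 - j) :=
    List.map_congr_left (fun k _ => countP_canon j k hj)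
  rw [e1, list_sum_eq (lab (m+1)) j (m+2) hj (fun k hk => (lab_mem (m+1) (by omega) k hk).2)]
  rfl


lemma sum_Icc_bot (a b : Nat) (h : a ≤ b) (f : Nat → Nat) :
    ∑ i ∈ Finset.Icc a b, f i = f a + ∑ i ∈ Finset.Icc (a + 1) b, f i := by
  have : Finset.Icc a b = insert a (Finset.Icc (a+1) b) := by
    ext x; simp [Finset.mem_Icc, Finset.mem_insert]; omega
  rw [this, Finset.sum_insert (by simp [Finset.mem_Icc])]

lemma sum_Icc_shift (a b : Nat) (ha : 2 ≤ a) (hb : 1 ≤ b) (f : Nat → Nat) :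
    ∑ i ∈ Finset.Icc a b, f (i - 1) = ∑ i ∈ Finset.Icc (a - 1) (b - 1), f i := by
  refine Finset.sum_nbij' (fun i => i - 1) (fun i => i + 1) ?_ ?_ ?_ ?_ ?_ <;>
    intro x hx <;> simp_all [Finset.mem_Icc] <;> omega

lemma cat_rec (n : Nat) :
    catalan (n + 1) = ∑ m ∈ Finset.range (n + 1), catalan m * catalan (n - m) := by
  rw [catalan_succ]
  exact Fin.sum_univ_eq_sum_range (fun i => catalan i * catalan (n - i)) (n + 1)

lemma master : ∀ n, 1 ≤ n →
    T n 2 = catalan n ∧ T n 3 + catalan (n - 1) = catalan n ∧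
    (∀ j, 3 ≤ j → T n j = ∑ m ∈ Finset.range (n - 1), catalan m * T (n - 1 - m) (j - 1)) := by
  intro n
  induction n using Nat.strong_induction_on with
  | _ n ih =>
  intro hn
  match n with
  | 1 =>
    refine ⟨by simp [T, lab, catalan_one], by simp [T, lab, catalan_zero], fun j hj => by
      simp only [show (1:Nat) - 1 = 0 from rfl, Finset.range_zero, Finset.sum_empty]
      rw [T, List.countP_eq_zero.mpr]
      intro k hk; simp [lab] at hk; subst hk; simp; omega⟩
  | M + 2 =>
    obtain ⟨A_N, B_N, K2_N⟩ := ih (M + 1) (by omega) (by omega)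
    simp only [Nat.add_sub_cancel] at K2_N B_N
    -- K2_N : ∀ j, 3 ≤ j → T (M+1) j = ∑ m ∈ range M, catalan m * T (M - m) (j-1)
    -- B_N : T (M+1) 3 + catalan M = catalan (M+1)
    -- inner-sum evaluation, used twice
    have inner : ∀ (c : Nat) (m' : Nat), m' < M → 3 ≤ c →
        ∑ i ∈ Finset.Icc c (M + 2), T (M - m') (i - 1) = T (M + 1 - m') c := by
      intro c m' hm' hc
      rw [sum_Icc_shift c (M + 2) (by omega) (by omega)]
      rw [show M + 1 - m' = (M - m') + 1 from by omega, K1 (M - m') c (by omega) (by omega)]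
      refine (Finset.sum_subset ?_ ?_).symm
      · intro x hx; simp [Finset.mem_Icc] at *; omega
      · intro x hx hnx
        simp only [Finset.mem_Icc] at hx hnx
        exact T_zero (by omega)
    have step1 : T (M + 2) 3
        = T (M + 1) 2 + ∑ m' ∈ Finset.range M, catalan m' * T (M + 1 - m') 3 := by
      rw [show (M:Nat) + 2 = (M + 1) + 1 from rfl, K1 (M + 1) 3 (by omega) (by omega)]
      rw [show (3:Nat) - 1 = 2 from rfl, sum_Icc_bot 2 (M + 2) (by omega)]
      congr 1
      have e1 : ∀ i ∈ Finset.Icc 3 (M + 2),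
          T (M + 1) i = ∑ m' ∈ Finset.range M, catalan m' * T (M - m') (i - 1) := by
        intro i hi
        exact K2_N i (Finset.mem_Icc.mp hi).1
      rw [Finset.sum_congr rfl e1, Finset.sum_comm]
      refine Finset.sum_congr rfl (fun m' hm' => ?_)
      rw [← Finset.mul_sum]
      congr 1
      exact inner 3 m' (Finset.mem_range.mp hm') (by omega)
    -- catalan expansions
    have c2 : catalan (M + 2) = (∑ m' ∈ Finset.range M, catalan m' * catalan (M + 1 - m'))
        + catalan M + catalan (M + 1) := by
      rw [cat_rec (M + 1), Finset.sum_range_succ, Finset.sum_range_succ]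
      rw [show M + 1 - M = 1 from by omega, show M + 1 - (M + 1) = 0 from by omega,
        catalan_zero, catalan_one, mul_one, mul_one]
    have c1 : catalan (M + 1) = (∑ m' ∈ Finset.range M, catalan m' * catalan (M - m'))
        + catalan M := by
      rw [cat_rec M, Finset.sum_range_succ, Nat.sub_self, catalan_zero, mul_one]
    have key : (∑ m' ∈ Finset.range M, catalan m' * T (M + 1 - m') 3)
        + (∑ m' ∈ Finset.range M, catalan m' * catalan (M - m'))
        = ∑ m' ∈ Finset.range M, catalan m' * catalan (M + 1 - m') := by
      rw [← Finset.sum_add_distrib]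
      refine Finset.sum_congr rfl (fun m' hm' => ?_)
      have hm'M : m' < M := Finset.mem_range.mp hm'
      have hB := (ih (M + 1 - m') (by omega) (by omega)).2.1
      rw [show M + 1 - m' - 1 = M - m' from by omega] at hB
      rw [← mul_add, hB]
    have step2 : T (M + 2) 3 + catalan (M + 1) = catalan (M + 2) := by
      rw [step1, A_N]
      omega
    have stepA : T (M + 2) 2 = catalan (M + 2) := by
      have h3 : T (M + 2) 3 = ∑ i ∈ Finset.Icc 2 (M + 2), T (M + 1) i := by
        rw [show (M:Nat) + 2 = (M + 1) + 1 from rfl, K1 (M + 1) 3 (by omega) (by omega)]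
      have e : T (M + 2) 2 = T (M + 1) 1 + T (M + 2) 3 := by
        rw [h3, show (M:Nat) + 2 = (M + 1) + 1 from rfl, K1 (M + 1) 2 (by omega) (by omega)]
        rw [show (2:Nat) - 1 = 1 from rfl, sum_Icc_bot 1 ((M + 1) + 1) (by omega)]
      rw [e, T_one (M + 1) (by omega), A_N]
      omega
    refine ⟨stepA, by rw [show M + 2 - 1 = M + 1 from by omega]; exact step2, ?_⟩
    intro j hj
    rw [show M + 2 - 1 = M + 1 from by omega]
    rcases Nat.lt_or_ge j 4 with hj4 | hj4
    · have : j = 3 := by omega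
      subst this
      have e2 : ∀ m' ∈ Finset.range (M + 1), catalan m' * T (M + 1 - m') (3 - 1)
          = catalan m' * catalan (M + 1 - m') := by
        intro m' hm'
        have hm'M : m' < M + 1 := Finset.mem_range.mp hm'
        rw [show (3:Nat) - 1 = 2 from rfl, (ih (M + 1 - m') (by omega) (by omega)).1]
      rw [Finset.sum_congr rfl e2]
      have c3 : catalan (M + 2) = (∑ m' ∈ Finset.range (M + 1), catalan m' * catalan (M + 1 - m'))
          + catalan (M + 1) := by
        rw [cat_rec (M + 1), Finset.sum_range_succ, Nat.sub_self, catalan_zero, mul_one]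
      omega
    · obtain ⟨jj, rfl⟩ : ∃ jj, j = jj + 4 := ⟨j - 4, by omega⟩
      rw [show (M:Nat) + 2 = (M + 1) + 1 from rfl, K1 (M + 1) (jj + 4) (by omega) (by omega)]
      rw [show jj + 4 - 1 = jj + 3 from by omega]
      have e1 : ∀ i ∈ Finset.Icc (jj + 3) (M + 2),
          T (M + 1) i = ∑ m' ∈ Finset.range M, catalan m' * T (M - m') (i - 1) := by
        intro i hi
        exact K2_N i (by have := (Finset.mem_Icc.mp hi).1; omega)
      rw [Finset.sum_congr rfl e1, Finset.sum_comm]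
      rw [Finset.sum_range_succ]
      have hz : T (M + 1 - M) (jj + 3) = 0 := by
        rw [show M + 1 - M = 1 from by omega]
        exact T_zero (by omega)
      rw [hz, mul_zero, add_zero]
      refine Finset.sum_congr rfl (fun m' hm' => ?_)
      rw [← Finset.mul_sum]
      congr 1
      exact inner (jj + 3) m' (Finset.mem_range.mp hm') (by omega)


/-- The list `L_n` has `C_n` (Catalan number) elements. -/
theorem stmt3 (n : Nat) (hn : 1 ≤ n) : (grayL n).length = catalan n := by
  have hp := grayL_perm n hn
  have h1 : (grayL n).length = (lab n).length := by
    rw [← List.length_map (as := grayL n) lastD, hp.length_eq]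
  have h2 : (lab n).length = T n 2 := by
    rw [T, List.countP_eq_length.mpr]
    intro k hk
    have := lab_mem n hn k hk
    simp
    omega
  rw [h1, h2]
  exact (master n hn).1
end

section
/- Every word in the list L_n is a word w_1 w_2 ... w_n with w_1 = 2 and, for each 1 ≤ j < n, 2 ≤ w_{j+1} ≤ w_j + 1 (i.e., each word is a path in the Catalan generating tree). -/
/-- `w` is a path from the root in the Catalan generating tree:
`w₁ = 2` and `2 ≤ w_{j+1} ≤ w_j + 1`. -/
def isTreeWord (w : List Nat) : Prop :=
  w.head? = some 2 ∧ ∀ j, j + 1 < w.length →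
    2 ≤ w.getD (j + 1) 0 ∧ w.getD (j + 1) 0 ≤ w.getD j 0 + 1

lemma getD_ge_two {w : List Nat} (h : isTreeWord w) : ∀ j, j < w.length → 2 ≤ w.getD j 0 := by
  intro j hj
  cases j with
  | zero =>
    cases w with
    | nil => simp at hj
    | cons a l =>
      have : a = 2 := by simpa using h.1
      simp [this]
  | succ j => exact (h.2 j hj).1

lemma lastD_eq_getD (w : List Nat) : lastD w = w.getD (w.length - 1) 0 := by
  rw [lastD, List.getLastD_eq_getLast?, List.getLast?_eq_getElem?, List.getD_eq_getElem?_getD]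

lemma lastD_ge_two {w : List Nat} (h : isTreeWord w) : 2 ≤ lastD w := by
  have hne : w ≠ [] := by
    intro hw; rw [hw] at h; simp [isTreeWord] at h
  rw [lastD_eq_getD]
  exact getD_ge_two h _ (by
    have : 0 < w.length := List.length_pos_iff.mpr hne
    omega)

lemma isTreeWord_append {w : List Nat} {d : Nat} (h : isTreeWord w)
    (hd2 : 2 ≤ d) (hd : d ≤ lastD w + 1) : isTreeWord (w ++ [d]) := by
  have hne : w ≠ [] := by
    intro hw; rw [hw] at h; simp [isTreeWord] at h
  have hpos : 0 < w.length := List.length_pos_iff.mpr hne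
  constructor
  · cases w with
    | nil => simp at hne
    | cons a l => simpa using h.1
  · intro j hj
    simp only [List.length_append, List.length_singleton] at hj
    rcases Nat.lt_or_ge (j + 1) w.length with hlt | hge
    · rw [List.getD_append _ _ _ _ hlt, List.getD_append _ _ _ _ (by omega)]
      exact h.2 j hlt
    · have hj1 : j + 1 = w.length := by omega
      have hgd : (w ++ [d]).getD (j + 1) 0 = d := by
        rw [hj1, List.getD_eq_getElem?_getD]; simp
      rw [hgd, List.getD_append _ _ _ _ (by omega)]
      have hjw : j = w.length - 1 := by omega
      rw [hjw, ← lastD_eq_getD]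
      exact ⟨hd2, hd⟩

lemma mem_sC {k j d : Nat} (hk : 2 ≤ k) (hj : j = 2 ∨ j = 3) (hd : d ∈ sC k j) :
    2 ≤ d ∧ d ≤ k + 1 := by
  rcases hj with rfl | rfl
  · simp only [sC, if_pos rfl, if_true, List.mem_cons, List.mem_map, List.mem_range] at hd
    rcases hd with rfl | ⟨t, ht, heq⟩ <;> omega
  · simp only [sC, if_neg (by omega : (3:Nat) ≠ 2), List.mem_append, List.mem_map,
      List.mem_range] at hd
    rcases hd with ⟨t, ht, heq⟩ | ⟨t, ht, heq⟩ <;> omega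

lemma sC_getLast? {k j : Nat} (hk : 2 ≤ k) (hj : j = 2 ∨ j = 3) :
    (sC k j).getLast? = some (5 - j) := by
  rcases hj with rfl | rfl
  · obtain ⟨m, rfl⟩ : ∃ m, k = m + 2 := ⟨k - 2, by omega⟩
    rw [sC, if_pos rfl]
    have : m + 2 - 1 = m + 1 := by omega
    rw [this, List.range_succ, List.map_append, ← List.cons_append,
      List.map_singleton, List.getLast?_concat]
    congr 1
    omega
  · simp only [sC, if_neg (by omega : (3:Nat) ≠ 2)]
    have h1 : List.map (fun t => 2 + t) (List.range (3 - 2)) = [2] := rfl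
    rw [h1, List.getLast?_concat]

lemma graySubsAux_mem {n : Nat} :
    ∀ (ws : List (List Nat)) (j : Nat), (j = 2 ∨ j = 3) →
    (∀ w ∈ ws, w.length = n ∧ isTreeWord w) →
    ∀ v ∈ (graySubsAux j ws).flatten, v.length = n + 1 ∧ isTreeWord v := by
  intro ws
  induction ws with
  | nil => intro j _ _ v hv; simp [graySubsAux] at hv
  | cons w ws ih =>
    intro j hj hws v hv
    have hw := hws w (List.mem_cons_self)
    have hk : 2 ≤ lastD w := lastD_ge_two hw.2
    rw [graySubsAux] at hv
    simp only [List.flatten_cons, List.mem_append] at hv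
    rcases hv with hv | hv
    · simp only [List.mem_map] at hv
      obtain ⟨d, hd, rfl⟩ := hv
      obtain ⟨hd2, hdk⟩ := mem_sC hk hj hd
      refine ⟨by simp [hw.1], isTreeWord_append hw.2 hd2 hdk⟩
    · -- recursive case: compute the new carry
      have hlast : ((sC (lastD w) j).map (fun d => w ++ [d])).getLast? =
          some (w ++ [5 - j]) := by
        rw [List.getLast?_map, sC_getLast? hk hj, Option.map_some]
      have hcarry : lastD (((sC (lastD w) j).map (fun d => w ++ [d])).getLastD []) = 5 - j := by
        rw [List.getLastD_eq_getLast?, hlast]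
        simp [lastD]
      rw [hcarry] at hv
      exact ih (5 - j) (by omega) (fun u hu => hws u (List.mem_cons_of_mem _ hu)) v hv

lemma grayL_mem : ∀ n, 1 ≤ n → ∀ w ∈ grayL n, w.length = n ∧ isTreeWord w := by
  intro n
  induction n with
  | zero => intro h; omega
  | succ m ih =>
    intro _ w hw
    match m, ih with
    | 0, _ =>
      simp only [grayL, List.mem_singleton] at hw
      subst hw
      refine ⟨rfl, by simp [isTreeWord], ?_⟩
      intro j hj
      simp at hj
    | m + 1, ih =>
      exact graySubsAux_mem (grayL (m + 1)) 2 (Or.inl rfl)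
        (fun u hu => ih (by omega) u hu) w hw

/-- Every word of `L_n` is a length-`n` path in the Catalan generating tree. -/
theorem stmt4 (n : Nat) (hn : 1 ≤ n) (w : List Nat) (hw : w ∈ grayL n) :
    w.length = n ∧ isTreeWord w := by
  exact grayL_mem n hn w hw
end

section
/- The list L_n contains no repeated words: all words of L_n are pairwise distinct. -/
lemma sC_nodup (k i : Nat) : (sC k i).Nodup := by
  unfold sC
  split
  · refine List.Nodup.cons ?_ ?_
    · simp only [List.mem_map, List.mem_range]
      rintro ⟨t, ht, h⟩
      omega
    · apply List.Nodup.map_on ?_ List.nodup_range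
      intro a ha b hb h
      simp only [List.mem_range] at ha hb
      omega
  · apply List.Nodup.append
    · apply List.Nodup.map_on ?_ List.nodup_range
      intro a _ b _ h; omega
    · apply List.Nodup.map_on ?_ List.nodup_range
      intro a _ b _ h; omega
    · intro x hx hy
      simp only [List.mem_map, List.mem_range] at hx hy
      obtain ⟨a, ha, rfl⟩ := hx
      obtain ⟨b, hb, h⟩ := hy
      omega

lemma mem_graySubsAux {x : List Nat} : ∀ {j : Nat} {ws : List (List Nat)},
    x ∈ (graySubsAux j ws).flatten → ∃ w ∈ ws, ∃ d, x = w ++ [d] := by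
  intro j ws
  induction ws generalizing j with
  | nil => simp [graySubsAux]
  | cons w ws ih =>
    intro hx
    rw [graySubsAux] at hx
    simp only [List.flatten_cons, List.mem_append] at hx
    rcases hx with hx | hx
    · simp only [List.mem_map] at hx
      obtain ⟨d, _, rfl⟩ := hx
      exact ⟨w, by simp, d, rfl⟩
    · obtain ⟨w', hw', d, rfl⟩ := ih hx
      exact ⟨w', by simp [hw'], d, rfl⟩

lemma grayL_length : ∀ n, ∀ w ∈ grayL n, w.length = n
  | 0 => by simp [grayL]
  | 1 => by intro w hw; simp only [grayL, List.mem_singleton] at hw; simp [hw]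
  | n + 2 => by
    intro w hw
    simp only [grayL, graySubs] at hw
    obtain ⟨w', hw', d, rfl⟩ := mem_graySubsAux hw
    simp [grayL_length (n + 1) w' hw']

lemma graySubsAux_nodup (m : Nat) : ∀ (ws : List (List Nat)) (j : Nat),
    ws.Nodup → (∀ w ∈ ws, w.length = m) → ((graySubsAux j ws).flatten).Nodup := by
  intro ws
  induction ws with
  | nil => intro j _ _; simp [graySubsAux]
  | cons w ws ih =>
    intro j hnd hlen
    rw [graySubsAux]
    simp only [List.flatten_cons]
    apply List.Nodup.append
    · apply List.Nodup.map_on ?_ (sC_nodup _ _)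
      intro a _ b _ h
      simpa using h
    · exact ih _ hnd.of_cons (fun w' hw' => hlen w' (by simp [hw']))
    · intro x hx hx'
      simp only [List.mem_map] at hx
      obtain ⟨d, _, rfl⟩ := hx
      obtain ⟨w', hw', d', heq⟩ := mem_graySubsAux hx'
      have hl : w.length = w'.length := by
        have h1 := hlen w (by simp)
        have h2 := hlen w' (by simp [hw'])
        omega
      have hww : w = w' := (List.append_inj heq hl).1
      exact ((List.nodup_cons.mp hnd).1) (hww ▸ hw')

lemma grayL_nodup : ∀ n, (grayL n).Nodup
  | 0 => by simp [grayL]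
  | 1 => by simp [grayL]
  | n + 2 =>
    graySubsAux_nodup (n + 1) (grayL (n + 1)) 2 (grayL_nodup (n + 1))
      (grayL_length (n + 1))

/-- The words of `L_n` are pairwise distinct. -/
theorem stmt6 (n : Nat) (hn : 1 ≤ n) : (grayL n).Nodup :=
  grayL_nodup n
end

section
/- The last digit of the final word of each sublist L_n^i belongs to {2, 3}. -/
lemma lastD_map_getLastD (l : List Nat) : ∀ (a : Nat) (w : List Nat),
    lastD ((l.map (fun d => w ++ [d])).getLastD (w ++ [a])) = l.getLastD a := by
  induction l with
  | nil => intro a w; simp [lastD, List.getLastD_concat]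
  | cons b t ih =>
      intro a w
      simp only [List.map_cons, List.getLastD_cons]
      exact ih b w

lemma key (k j : Nat) (hj : j = 2 ∨ j = 3) (w : List Nat) :
    lastD (((sC k j).map (fun d => w ++ [d])).getLastD []) = 2 ∨
    lastD (((sC k j).map (fun d => w ++ [d])).getLastD []) = 3 := by
  rcases hj with rfl | rfl
  · have h : sC k 2 = 2 :: (List.range (k - 1)).map (fun t => k + 1 - t) := by
      simp [sC]
    rw [h]
    simp only [List.map_cons, List.getLastD_cons]
    rw [lastD_map_getLastD]
    rcases Nat.lt_or_ge k 2 with hk | hk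
    · interval_cases k <;> simp
    · obtain ⟨m, rfl⟩ : ∃ m, k = m + 2 := ⟨k - 2, by omega⟩
      right
      have : m + 2 - 1 = m + 1 := rfl
      rw [this, List.range_succ, List.map_append]
      simp [List.getLastD_concat]
      omega
  · have h : sC k 3 = (List.range (k - 1)).map (fun t => 3 + t) ++ [2] := by
      have : k + 2 - 3 = k - 1 := by omega
      simp [sC, this, List.range_succ]
    rw [h]
    left
    simp [lastD, List.getLastD_concat]

lemma aux_lemma : ∀ (ws : List (List Nat)) (j : Nat), (j = 2 ∨ j = 3) →
    ∀ sub ∈ graySubsAux j ws,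
    lastD (sub.getLastD []) = 2 ∨ lastD (sub.getLastD []) = 3 := by
  intro ws
  induction ws with
  | nil => intro j _ sub h; simp [graySubsAux] at h
  | cons w t ih =>
      intro j hj sub h
      rw [graySubsAux] at h
      simp only [List.mem_cons] at h
      rcases h with rfl | h
      · exact key _ _ hj w
      · exact ih _ (key _ _ hj w) sub h

/-- The last digit of the final word of each sublist `L_{n+1}^i` is 2 or 3. -/
theorem stmt8 (n : Nat) (hn : 1 ≤ n) (sub : List (List Nat))
    (hsub : sub ∈ graySubs (grayL n)) :
    lastD (sub.getLastD []) = 2 ∨ lastD (sub.getLastD []) = 3 :=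
  aux_lemma _ 2 (Or.inl rfl) sub hsub
end

section
/- The number of words of length n over ℕ with first digit 2 and satisfying 2 ≤ w_{j+1} ≤ w_j + 1 for all 1 ≤ j < n equals the n-th Catalan number C_n = (1/(n+1))·binom(2n, n). -/
namespace Stmt10Aux

open Finset

/-- relation on reversed words -/
def Rel (b a : ℕ) : Prop := 2 ≤ b ∧ b ≤ a + 1

/-- reversed tree words of length `n` with head `k` -/
def WSk : ℕ → ℕ → Finset (List ℕ)
  | 0, _ => ∅
  | 1, k => if k = 2 then {[2]} else ∅
  | (n+2), k =>
    if 2 ≤ k then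
      (Finset.Icc (k-1) (n+2)).biUnion (fun j => (WSk (n+1) j).image (k :: ·))
    else ∅

lemma getLast?_cons_ne {a : ℕ} {t : List ℕ} (h : t ≠ []) :
    (a :: t).getLast? = t.getLast? := by
  cases t with
  | nil => exact absurd rfl h
  | cons b t' => rw [List.getLast?_cons_cons]

lemma Icc_insert_bot {m b : ℕ} (h : m ≤ b) :
    Finset.Icc m b = insert m (Finset.Icc (m+1) b) := by
  rw [Finset.Icc_add_one_left_eq_Ioc, Finset.Ioc_insert_left h]

lemma headBound : ∀ l : List ℕ, List.Chain' Rel l → l.getLast? = some 2 →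
    ∀ x, l.head? = some x → x ≤ l.length + 1
  | [], _, h, _, _ => by simp at h
  | [a], _, h, x, hx => by
    simp only [List.getLast?_singleton, Option.some.injEq] at h
    simp only [List.head?_cons, Option.some.injEq] at hx
    simp only [List.length_singleton]
    omega
  | (a :: b :: t), hc, h, x, hx => by
    simp only [List.Chain', List.isChain_cons_cons] at hc
    have hb := headBound (b :: t) hc.2 (by simpa using h) b rfl
    simp at hx
    have := hc.1.2
    simp [List.length_cons] at hb ⊢
    omega

lemma mem_WSk : ∀ n k l, l ∈ WSk n k ↔
    l.length = n ∧ l.head? = some k ∧ l.getLast? = some 2 ∧ List.Chain' Rel l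
  | 0, k, l => by
    simp only [WSk, Finset.notMem_empty, false_iff]
    rintro ⟨h, _⟩
    cases l <;> simp_all
  | 1, k, l => by
    simp only [WSk]
    constructor
    · intro h
      split at h
      · simp at h; subst h; simp_all [List.Chain']
      · simp at h
    · rintro ⟨hlen, hhead, hlast, _⟩
      match l, hlen with
      | [a], _ =>
        simp at hhead hlast
        subst hhead; subst hlast
        simp
  | (n+2), k, l => by
    simp only [WSk]
    constructor
    · intro h
      split at h
      case isTrue hk =>
        simp only [Finset.mem_biUnion, Finset.mem_image, Finset.mem_Icc] at h
        obtain ⟨j, ⟨hj1, hj2⟩, t, ht, rfl⟩ := h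
        rw [mem_WSk] at ht
        obtain ⟨htlen, hthead, htlast, htchain⟩ := ht
        have htne : t ≠ [] := by intro h; subst h; simp at htlen
        refine ⟨by simp [htlen], by simp, ?_, ?_⟩
        · rw [getLast?_cons_ne htne]; exact htlast
        · simp only [List.Chain', List.isChain_cons]
          exact ⟨fun y hy => by rw [hthead] at hy; cases hy; exact ⟨hk, by omega⟩, htchain⟩
      case isFalse => simp at h
    · rintro ⟨hlen, hhead, hlast, hchain⟩
      match l, hlen with
      | (a :: t), hlen =>
        obtain rfl : k = a := by simpa using hhead.symm
        have htne : t ≠ [] := by intro h; subst h; simp at hlen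
        rw [getLast?_cons_ne htne] at hlast
        simp only [List.Chain', List.isChain_cons] at hchain
        obtain ⟨hR, htchain⟩ := hchain
        obtain ⟨j, hj⟩ : ∃ j, t.head? = some j := by
          cases t with
          | nil => exact absurd rfl htne
          | cons x xs => exact ⟨x, rfl⟩
        have hRkj := hR j hj
        have hk : 2 ≤ k := hRkj.1
        have hkj : k ≤ j + 1 := hRkj.2
        have hjb : j ≤ t.length + 1 := headBound t htchain hlast j hj
        have htlen : t.length = n + 1 := by simp at hlen; omega
        rw [if_pos hk]
        simp only [Finset.mem_biUnion, Finset.mem_image, Finset.mem_Icc]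
        refine ⟨j, ⟨by omega, by omega⟩, t, ?_, rfl⟩
        rw [mem_WSk]
        exact ⟨htlen, hj, hlast, htchain⟩

/-- members of `WSk n k` have head `k` -/
lemma head_of_mem {n k l} (h : l ∈ WSk n k) : l.head? = some k :=
  ((mem_WSk n k l).1 h).2.1

lemma choose_succ_le {m r : ℕ} (h : m ≤ 2 * r + 1) : m.choose (r + 1) ≤ m.choose r := by
  have key := Nat.choose_succ_right_eq m r
  have h2 : m - r ≤ r + 1 := by omega
  have : m.choose (r + 1) * (r + 1) ≤ m.choose r * (r + 1) :=
    key ▸ Nat.mul_le_mul_left _ h2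
  exact Nat.le_of_mul_le_mul_right this (by omega)

lemma card_WSk : ∀ n, 1 ≤ n → ∀ k, 2 ≤ k → k ≤ n + 1 →
    (WSk n k).card = (2*n - k).choose (n-1) - (2*n - k).choose n := by
  intro n hn
  induction n, hn using Nat.le_induction with
  | base =>
    intro k hk2 hk3
    have : k = 2 := by omega
    subst this
    simp [WSk]
  | succ n hn ih =>
    intro k hk2 hk3
    obtain ⟨m, rfl⟩ : ∃ m, n = m + 1 := ⟨n - 1, by omega⟩
    show (WSk (m + 2) k).card = _
    rw [WSk, if_pos hk2]
    rw [Finset.card_biUnion]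
    · have hcard : ∀ j ∈ Finset.Icc (k-1) (m+2),
          ((WSk (m+1) j).image (k :: ·)).card
            = (2*(m+1) - j).choose m - (2*(m+1) - j).choose (m+1) := by
        intro j hj
        rw [Finset.card_image_of_injective _ (fun a b h => by injection h)]
        simp only [Finset.mem_Icc] at hj
        rcases Nat.lt_or_ge j 2 with hj2 | hj2
        · -- j ≤ 1 : WSk empty and formula is 0 by symmetry
          have hempty : WSk (m+1) j = ∅ := by
            rw [Finset.eq_empty_iff_forall_notMem]
            intro l hl
            have := (mem_WSk _ _ _).1 hl
            have hj1 : j = 1 := by omega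
            -- head = j but every word has head ≥ 2 unless length 1 and head=2
            obtain ⟨hlen, hhead, hlast, hchain⟩ := this
            match l, hlen with
            | [a], _ => simp at hhead hlast; omega
            | (a :: b :: t), _ =>
              simp at hhead
              simp only [List.Chain', List.isChain_cons_cons] at hchain
              have := hchain.1.1
              omega
          rw [hempty]
          have hj1 : j = 1 := by omega
          subst hj1
          have : 2*(m+1) - 1 = 2*m + 1 := by omega
          rw [this]
          have hsymm : (2*m+1).choose m = (2*m+1).choose (m+1) := by
            have := Nat.choose_symm (n := 2*m+1) (k := m+1) (by omega)
            simpa [show 2*m+1 - (m+1) = m by omega] using this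
          simp [hsymm]
        · exact ih j hj2 (by omega)
      rw [Finset.sum_congr rfl hcard]
      have hterm : ∀ j ∈ Finset.Icc (k-1) (m+2),
          (2*(m+1) - j).choose (m+1) ≤ (2*(m+1) - j).choose m := by
        intro j hj
        simp only [Finset.mem_Icc] at hj
        exact choose_succ_le (by omega)
      rw [Finset.sum_tsub_distrib _ hterm]
      -- reindex both sums via j ↦ 2(m+1) - j
      have reindex : ∀ r : ℕ, ∑ j ∈ Finset.Icc (k-1) (m+2), (2*(m+1) - j).choose r
          = ∑ i ∈ Finset.Icc m (2*(m+1) - (k-1)), i.choose r := by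
        intro r
        apply Finset.sum_nbij' (fun j => 2*(m+1) - j) (fun i => 2*(m+1) - i)
        · intro a ha; simp only [Finset.mem_Icc] at *; omega
        · intro a ha; simp only [Finset.mem_Icc] at *; omega
        · intro a ha; simp only [Finset.mem_Icc] at ha; omega
        · intro a ha; simp only [Finset.mem_Icc] at ha; omega
        · intro a ha; rfl
      rw [reindex, reindex]
      have e1 : 2*(m+1) - (k-1) = 2*(m+2) - k - 1 := by omega
      have hk4 : m ≤ 2*(m+2) - k - 1 := by omega
      -- first sum: hockey stick
      have s1 : ∑ i ∈ Finset.Icc m (2*(m+2) - k - 1), i.choose m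
          = (2*(m+2) - k).choose (m+1) := by
        rw [Nat.sum_Icc_choose]
        congr 1
        omega
      -- second sum: drop the bottom zero term then hockey stick
      have s2 : ∑ i ∈ Finset.Icc m (2*(m+2) - k - 1), i.choose (m+1)
          = (2*(m+2) - k).choose (m+2) := by
        rcases Nat.lt_or_ge (2*(m+2) - k - 1) (m+1) with hend | hend
        · -- then the interval is just {m} (since m ≤ end); choose m (m+1) = 0
          have : 2*(m+2) - k - 1 = m := by omega
          rw [this]
          simp [Nat.choose_eq_zero_of_lt (show m < m + 1 by omega),
            Nat.choose_eq_zero_of_lt (show 2*(m+2) - k < m + 2 by omega)]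
        · rw [Icc_insert_bot (show m ≤ 2*(m+2) - k - 1 by omega),
            Finset.sum_insert (by simp), Nat.sum_Icc_choose,
            Nat.choose_eq_zero_of_lt (show m < m + 1 by omega),
            show 2*(m+2) - k - 1 + 1 = 2*(m+2) - k by omega, Nat.zero_add]
      rw [e1, s1, s2]
      congr 1
    · -- pairwise disjoint
      intro j1 _ j2 _ hne
      simp only [Function.onFun]
      rw [Finset.disjoint_left]
      rintro x hx1 hx2
      simp only [Finset.mem_image] at hx1 hx2
      obtain ⟨t1, ht1, rfl⟩ := hx1
      obtain ⟨t2, ht2, heq⟩ := hx2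
      have h1 := head_of_mem ht1
      have h2 := head_of_mem ht2
      have : t2 = t1 := by injection heq
      subst this
      rw [h1] at h2
      exact hne (Option.some.inj h2)

/-- the full set of reversed tree words of length n -/
def S (n : ℕ) : Finset (List ℕ) := (Finset.Icc 2 (n+1)).biUnion (WSk n)

lemma mem_S {n : ℕ} (hn : 1 ≤ n) (l : List ℕ) : l ∈ S n ↔
    l.length = n ∧ l.getLast? = some 2 ∧ List.Chain' Rel l := by
  constructor
  · intro h
    simp only [S, Finset.mem_biUnion] at h
    obtain ⟨k, _, hk⟩ := h
    have := (mem_WSk n k l).1 hk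
    exact ⟨this.1, this.2.2⟩
  · rintro ⟨hlen, hlast, hchain⟩
    obtain ⟨k, hk⟩ : ∃ k, l.head? = some k := by
      cases l with
      | nil => simp at hlen; omega
      | cons x xs => exact ⟨x, rfl⟩
    have hkb : k ≤ l.length + 1 := headBound l hchain hlast k hk
    have hk2 : 2 ≤ k := by
      match l, hk with
      | [a], hk => simp at hk hlast; omega
      | (a :: b :: t), hk =>
        simp at hk
        simp only [List.Chain', List.isChain_cons_cons] at hchain
        have := hchain.1.1
        omega
    simp only [S, Finset.mem_biUnion]
    exact ⟨k, Finset.mem_Icc.2 ⟨hk2, by omega⟩,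
      (mem_WSk n k l).2 ⟨hlen, hk, hlast, hchain⟩⟩

lemma card_S {n : ℕ} (hn : 1 ≤ n) :
    (S n).card = (2*n - 1).choose n - (2*n - 1).choose (n+1) := by
  rw [S, Finset.card_biUnion]
  · have hcard : ∀ k ∈ Finset.Icc 2 (n+1),
        (WSk n k).card = (2*n - k).choose (n-1) - (2*n - k).choose n := by
      intro k hk
      simp only [Finset.mem_Icc] at hk
      exact card_WSk n hn k hk.1 hk.2
    rw [Finset.sum_congr rfl hcard]
    have hterm : ∀ k ∈ Finset.Icc 2 (n+1),
        (2*n - k).choose n ≤ (2*n - k).choose (n-1) := by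
      intro k hk
      simp only [Finset.mem_Icc] at hk
      have h := choose_succ_le (m := 2*n - k) (r := n - 1) (by omega)
      rwa [show n - 1 + 1 = n by omega] at h
    rw [Finset.sum_tsub_distrib _ hterm]
    have reindex : ∀ r : ℕ, ∑ k ∈ Finset.Icc 2 (n+1), (2*n - k).choose r
        = ∑ i ∈ Finset.Icc (n-1) (2*n - 2), i.choose r := by
      intro r
      apply Finset.sum_nbij' (fun j => 2*n - j) (fun i => 2*n - i)
      · intro a ha; simp only [Finset.mem_Icc] at *; omega
      · intro a ha; simp only [Finset.mem_Icc] at *; omega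
      · intro a ha; simp only [Finset.mem_Icc] at ha; omega
      · intro a ha; simp only [Finset.mem_Icc] at ha; omega
      · intro a ha; rfl
    rw [reindex, reindex]
    have s1 : ∑ i ∈ Finset.Icc (n-1) (2*n - 2), i.choose (n-1)
        = (2*n - 1).choose n := by
      rw [Nat.sum_Icc_choose]
      congr 1 <;> omega
    have s2 : ∑ i ∈ Finset.Icc (n-1) (2*n - 2), i.choose n
        = (2*n - 1).choose (n+1) := by
      rcases Nat.lt_or_ge (2*n - 2) n with hend | hend
      · -- n = 1 : interval = {0}
        have hn1 : n = 1 := by omega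
        subst hn1
        norm_num
      · rw [Icc_insert_bot (show n - 1 ≤ 2*n - 2 by omega),
          Finset.sum_insert (by simp only [Finset.mem_Icc, not_and, not_le]; omega),
          show n - 1 + 1 = n by omega, Nat.sum_Icc_choose,
          Nat.choose_eq_zero_of_lt (show n - 1 < n by omega),
          show 2*n - 2 + 1 = 2*n - 1 by omega, Nat.zero_add]
    rw [s1, s2]
  · intro j1 _ j2 _ hne
    simp only [Function.onFun]
    rw [Finset.disjoint_left]
    intro x hx1 hx2
    have h1 := head_of_mem hx1
    have h2 := head_of_mem hx2
    rw [h1] at h2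
    exact hne (Option.some.inj h2)

lemma getD_eq {w : List ℕ} {i : ℕ} (h : i < w.length) : w.getD i 0 = w[i] :=
  List.getD_eq_getElem w 0 h

lemma isTreeWord_iff (w : List ℕ) :
    isTreeWord w ↔ w.reverse.getLast? = some 2 ∧ List.Chain' Rel w.reverse := by
  rw [List.getLast?_reverse]
  simp only [List.Chain', List.isChain_reverse]
  unfold isTreeWord
  constructor
  · rintro ⟨h1, h2⟩
    refine ⟨h1, List.isChain_iff_getElem.2 fun i hi => ?_⟩
    have := h2 i (by omega)
    rw [getD_eq (show i + 1 < w.length by omega),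
      getD_eq (show i < w.length by omega)] at this
    simpa [flip, Rel, List.get_eq_getElem] using this
  · rintro ⟨h1, h2⟩
    refine ⟨h1, fun j hj => ?_⟩
    have := List.isChain_iff_getElem.1 h2 j (by omega)
    simp only [flip, Rel, List.get_eq_getElem] at this
    rw [getD_eq (show j + 1 < w.length by omega),
      getD_eq (show j < w.length by omega)]
    exact this

lemma final_arith {n : ℕ} (hn : 1 ≤ n) :
    (2*n - 1).choose n - (2*n - 1).choose (n+1) = (2 * n).choose n / (n + 1) := by
  have hle : (2*n - 1).choose (n+1) ≤ (2*n - 1).choose n :=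
    choose_succ_le (by omega)
  have key : (2*n - 1).choose (n+1) * (n+1) = (2*n - 1).choose n * (n - 1) := by
    have := Nat.choose_succ_right_eq (2*n - 1) n
    rwa [show 2*n - 1 - n = n - 1 by omega] at this
  have symm : (2*n - 1).choose (n-1) = (2*n - 1).choose n := by
    have := Nat.choose_symm (n := 2*n - 1) (k := n) (by omega)
    rwa [show 2*n - 1 - n = n - 1 by omega] at this
  have double : (2*n).choose n = 2 * (2*n - 1).choose n := by
    have pascal : (2*n).choose n = (2*n - 1).choose (n-1) + (2*n - 1).choose n := by
      obtain ⟨p, rfl⟩ : ∃ p, n = p + 1 := ⟨n - 1, by omega⟩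
      rw [show 2*(p+1) = 2*p+1+1 by ring, show 2*p+1+1-1 = 2*p+1 by omega,
        show p+1-1 = p by omega, Nat.choose_succ_succ]
    omega
  have main : ((2*n - 1).choose n - (2*n - 1).choose (n+1)) * (n+1) = (2*n).choose n := by
    rw [Nat.sub_mul, key, double, show n+1 = (n-1)+2 by omega, Nat.mul_add]
    omega
  rw [Nat.div_eq_of_eq_mul_left (by omega) main.symm]

end Stmt10Aux

/-- The number of length-`n` paths in the Catalan generating tree is the
Catalan number `C_n = binom(2n, n)/(n+1)`. -/
theorem stmt10 (n : Nat) (hn : 1 ≤ n) :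
    Nat.card { w : List Nat // w.length = n ∧ isTreeWord w } =
      (2 * n).choose n / (n + 1) := by
  open Stmt10Aux in
  have e : { w : List Nat // w.length = n ∧ isTreeWord w } ≃ { l // l ∈ S n } := by
    refine ⟨fun ⟨w, hw⟩ => ⟨w.reverse, ?_⟩, fun ⟨l, hl⟩ => ⟨l.reverse, ?_⟩, ?_, ?_⟩
    · rw [mem_S hn]
      obtain ⟨hlen, htw⟩ := hw
      rw [isTreeWord_iff] at htw
      exact ⟨by simp [hlen], htw⟩
    · rw [mem_S hn] at hl
      constructor
      · simp [hl.1]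
      · rw [isTreeWord_iff]
        simpa using ⟨hl.2.1, hl.2.2⟩
    · rintro ⟨w, hw⟩; simp
    · rintro ⟨l, hl⟩; simp
  rw [Nat.card_congr e, Nat.card_eq_finsetCard, Stmt10Aux.card_S hn,
    Stmt10Aux.final_arith hn]
end

section
/- The map sending a word w_1...w_n (a path in the Catalan generating tree, i.e., w_1 = 2 and 2 ≤ w_{j+1} ≤ w_j + 1) to the binary string obtained by the inductive procedure—starting from '10' and, when appending digit w_{j+1} after w_j, replacing the final w_j − 1 zeros by (w_j − w_{j+1} + 1) zeros, then a 1, then (w_{j+1} − 1) zeros—produces a balanced binary string of length 2n encoding a Dyck path (every prefix has at least as many 1s as 0s, total number of 1s equals total number of 0s equals n). -/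
def zeros (m : Nat) : List Bool := List.replicate m false

/-- Appending digit `i` after a word ending in digit `k`: replace the final
`k - 1` zeros by `k + 1 - i` zeros, a one, and `i - 1` zeros. -/
def encStep (u : List Bool) (k i : Nat) : List Bool :=
  u.take (u.length - (k - 1)) ++ zeros (k + 1 - i) ++ [true] ++ zeros (i - 1)

def encAux : List Bool → Nat → List Nat → List Bool
  | u, _, [] => u
  | u, k, i :: rest => encAux (encStep u k i) i rest

/-- Encoding of a generating-tree word into a binary (Dyck) string,
starting from `10` for the word `2`. -/
def enc : List Nat → List Bool
  | [] => []
  | _ :: rest => encAux [true, false] 2 rest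

/-- A Dyck word: balanced, and every prefix has at least as many ones
(`true`) as zeros (`false`). -/
def isDyck (u : List Bool) : Prop :=
  u.count true = u.count false ∧
  ∀ m, (u.take m).count false ≤ (u.take m).count true

def DyckInv (u : List Bool) (k : Nat) : Prop :=
  k - 1 ≤ u.length ∧
  u.drop (u.length - (k-1)) = zeros (k-1) ∧
  u.count true = u.count false ∧
  ∀ m, (u.take m).count false ≤ (u.take m).count true

lemma true_take_count (j : Nat) :
    (([true] : List Bool).take j).count false = 0 ∧
    (([true] : List Bool).take j).count true = min j 1 := by
  cases j with
  | zero => simp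
  | succ n => simp

lemma tcounts (a b j : Nat) :
    ((zeros a ++ [true] ++ zeros b).take j).count false = min j a + min (j - a - 1) b ∧
    ((zeros a ++ [true] ++ zeros b).take j).count true = min (j - a) 1 := by
  have h1 := (true_take_count (j - a)).1
  have h2 := (true_take_count (j - a)).2
  constructor <;>
  · simp only [List.take_append, List.count_append, zeros,
      List.take_replicate, List.count_replicate, List.length_append,
      List.length_replicate, List.length_cons, List.length_nil]
    simp [h1, h2] <;> omega

lemma encStep_inv (u : List Bool) (k i : Nat) (hk : 2 ≤ k) (hi2 : 2 ≤ i)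
    (hik : i ≤ k + 1) (h : DyckInv u k) :
    DyckInv (encStep u k i) i ∧ (encStep u k i).length = u.length + 2 := by
  obtain ⟨hlen, hdrop, hbal, hpre⟩ := h
  set L := u.length - (k-1) with hL
  set v := u.take L with hv
  have hvlen : v.length = L := by simp [hv]; omega
  have hu : u = v ++ zeros (k-1) := by
    rw [hv, ← hdrop]; exact (List.take_append_drop L u).symm
  have hcntf : u.count false = v.count false + (k-1) := by
    rw [hu]; simp [zeros, List.count_append, List.count_replicate]
  have hcntt : u.count true = v.count true := by
    rw [hu]; simp [zeros, List.count_append, List.count_replicate]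
  have hsur : v.count true = v.count false + (k-1) := by omega
  have hpre' : ∀ m, (v.take m).count false ≤ (v.take m).count true := by
    intro m
    have : v.take m = u.take (min m L) := by rw [hv, List.take_take]
    rw [this]; exact hpre _
  have hstep : encStep u k i = v ++ (zeros (k+1-i) ++ [true] ++ zeros (i-1)) := by
    simp [encStep, hv, hL, List.append_assoc]
  constructor
  · refine ⟨?_, ?_, ?_, ?_⟩
    · rw [hstep]; simp [zeros]; omega
    · rw [hstep]
      have h2 : (v ++ (zeros (k+1-i) ++ [true] ++ zeros (i-1))).length - (i-1)
          = (v ++ zeros (k+1-i) ++ [true]).length := by simp [zeros]; omega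
      rw [h2]
      rw [show v ++ (zeros (k+1-i) ++ [true] ++ zeros (i-1))
          = (v ++ zeros (k+1-i) ++ [true]) ++ zeros (i-1) by simp [List.append_assoc]]
      exact List.drop_left
    · rw [hstep]
      simp [zeros, List.count_append, List.count_replicate]
      omega
    · intro m
      rw [hstep]
      have key := tcounts (k+1-i) (i-1) (m - v.length)
      rw [List.take_append, List.count_append, List.count_append,
        key.1, key.2]
      by_cases hm : m ≤ v.length
      · have hj : m - v.length = 0 := by omega
        have := hpre' m
        rw [hj]; simp; omega
      · have hvm : v.take m = v := List.take_of_length_le (by omega)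
        rw [hvm]
        omega
  · rw [hstep]; simp [zeros]; omega

lemma encAux_main : ∀ (rest : List Nat) (u : List Bool) (k : Nat),
    2 ≤ k → DyckInv u k → List.Chain (fun a b => 2 ≤ b ∧ b ≤ a + 1) k rest →
    (encAux u k rest).length = u.length + 2 * rest.length ∧
      ∃ k', DyckInv (encAux u k rest) k' := by
  intro rest
  induction rest with
  | nil => intro u k hk hI _; exact ⟨by simp [encAux], k, hI⟩
  | cons i rest ih =>
    intro u k hk hI hc
    rcases List.isChain_cons_cons.mp hc with ⟨⟨hi2, hik⟩, hc⟩
    obtain ⟨hI', hlen⟩ := encStep_inv u k i hk hi2 hik hI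
    obtain ⟨h1, h2⟩ := ih (encStep u k i) i hi2 hI' hc
    refine ⟨?_, h2⟩
    simp only [encAux] at *
    rw [h1, hlen]; simp; omega

lemma chain_of_getD (l : List Nat) : ∀ (k : Nat),
    (∀ j, j < l.length → 2 ≤ l.getD j 0 ∧ l.getD j 0 ≤ ((k :: l).getD j 0) + 1) →
    List.Chain (fun a b => 2 ≤ b ∧ b ≤ a + 1) k l := by
  induction l with
  | nil => intro k _; exact List.Chain.nil
  | cons b l ih =>
    intro k h
    refine List.Chain.cons (h 0 (by simp)) (ih b ?_)
    intro j hj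
    exact h (j+1) (Nat.succ_lt_succ hj)


/-- The encoding of a generating-tree word of length `n` is a Dyck word of
length `2n`. -/
theorem stmt11 (w : List Nat) (hw : isTreeWord w) :
    (enc w).length = 2 * w.length ∧ isDyck (enc w) := by
  obtain ⟨hh, hcond⟩ := hw
  match w with
  | [] => simp at hh
  | a :: rest =>
    have ha : a = 2 := by simpa using hh
    subst ha
    have hbase : DyckInv [true, false] 2 := by
      refine ⟨by simp, by simp [zeros], by simp, ?_⟩
      intro m
      match m with
      | 0 => simp
      | 1 => simp
      | (n+2) => rw [List.take_of_length_le (by simp)]; simp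
    have hchain : List.Chain (fun a b => 2 ≤ b ∧ b ≤ a + 1) 2 rest := by
      apply chain_of_getD
      intro j hj
      exact hcond j (Nat.succ_lt_succ hj)
    obtain ⟨h1, k', h2⟩ := encAux_main rest [true, false] 2 (le_refl 2) hbase hchain
    refine ⟨?_, h2.2.2.1, h2.2.2.2⟩
    simp only [enc] at *
    rw [h1]; simp; omega
end

section
/- The encoding from Catalan generating-tree words of length n to Dyck words of semilength n (via the inductive zero-replacement procedure) is a bijection. -/
/- ### Auxiliary development -/

def chain : Nat → List Nat → Prop
  | _, [] => True
  | k, i :: rest => 2 ≤ i ∧ i ≤ k + 1 ∧ chain i rest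

def body : Nat → List Nat → List Bool
  | k, [] => zeros (k - 1)
  | k, i :: rest => zeros (k + 1 - i) ++ true :: body i rest

def decB : List Bool → Nat → List Nat
  | [], _ => []
  | false :: u, s => decB u (s - 1)
  | true :: u, s => s :: decB u (s + 1)

def dec : List Bool → List Nat
  | true :: u => 2 :: decB u 3
  | _ => []

lemma zeros_length (m : Nat) : (zeros m).length = m := List.length_replicate ..

lemma zeros_count_false (m : Nat) : (zeros m).count false = m := by
  simp [zeros]

lemma zeros_count_true (m : Nat) : (zeros m).count true = 0 := by
  simp [zeros, List.count_replicate]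

lemma count_tf (u : List Bool) : u.count true + u.count false = u.length := by
  induction u with
  | nil => simp
  | cons b u ih => cases b <;> simp [List.count_cons] <;> omega

lemma zeros_succ (m : Nat) : zeros (m + 1) = false :: zeros m := rfl

lemma encAux_eq (l : List Nat) : ∀ (v : List Bool) (k : Nat),
    encAux (v ++ zeros (k - 1)) k l = v ++ body k l := by
  induction l with
  | nil => intro v k; simp [encAux, body]
  | cons i rest ih =>
    intro v k
    have hstep : encStep (v ++ zeros (k - 1)) k i
        = (v ++ zeros (k + 1 - i) ++ [true]) ++ zeros (i - 1) := by
      unfold encStep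
      have h1 : (v ++ zeros (k - 1)).length - (k - 1) = v.length := by
        simp [zeros_length]
      rw [h1, List.take_left' (by rfl)]
    rw [encAux, hstep, ih]
    simp [body, zeros]

lemma enc_cons (a : Nat) (l : List Nat) : enc (a :: l) = true :: body 2 l := by
  have : enc (a :: l) = encAux ([true] ++ zeros (2 - 1)) 2 l := rfl
  rw [this, encAux_eq]
  simp

lemma chain_mono {k k' : Nat} {l : List Nat} (h : chain k l) (hk : k ≤ k') :
    chain k' l := by
  cases l with
  | nil => trivial
  | cons i rest =>
    obtain ⟨h1, h2, h3⟩ := h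
    exact ⟨h1, by omega, h3⟩

lemma decB_zeros_append (m : Nat) : ∀ (u : List Bool) (s : Nat),
    decB (zeros m ++ u) s = decB u (s - m) := by
  induction m with
  | zero => intro u s; simp [zeros]
  | succ m ih =>
    intro u s
    rw [zeros_succ]
    show decB (false :: (zeros m ++ u)) s = _
    rw [decB, ih]
    congr 1
    omega

lemma decB_zeros (m : Nat) (s : Nat) : decB (zeros m) s = [] := by
  have := decB_zeros_append m [] s
  simpa [decB] using this

lemma decB_body {l : List Nat} : ∀ {k : Nat}, chain k l →
    decB (body k l) (k + 1) = l := by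
  induction l with
  | nil => intro k _; simp [body, decB_zeros]
  | cons i rest ih =>
    intro k h
    obtain ⟨h1, h2, h3⟩ := h
    show decB (zeros (k + 1 - i) ++ true :: body i rest) (k + 1) = _
    rw [decB_zeros_append]
    have hs : k + 1 - (k + 1 - i) = i := by omega
    rw [hs, decB, ih h3]

lemma body_count_true {l : List Nat} : ∀ {k : Nat}, chain k l →
    (body k l).count true = l.length := by
  induction l with
  | nil => intro k _; simp [body, zeros_count_true]
  | cons i rest ih =>
    intro k h
    obtain ⟨h1, h2, h3⟩ := h
    show (zeros (k + 1 - i) ++ true :: body i rest).count true = _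
    simp [zeros_count_true, ih h3]

lemma body_count_false {l : List Nat} : ∀ {k : Nat}, chain k l →
    (body k l).count false = l.length + (k - 1) := by
  induction l with
  | nil => intro k _; simp [body, zeros_count_false]
  | cons i rest ih =>
    intro k h
    obtain ⟨h1, h2, h3⟩ := h
    show (zeros (k + 1 - i) ++ true :: body i rest).count false = _
    simp [zeros_count_false, ih h3, List.count_cons]
    omega

lemma body_prefix {l : List Nat} : ∀ {k : Nat}, chain k l → ∀ m,
    ((body k l).take m).count false ≤ ((body k l).take m).count true + (k - 1) := by
  induction l with
  | nil =>
    intro k _ m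
    have heq : body k [] = zeros (k-1) := rfl
    have : (zeros (k-1)).take m = zeros (min m (k-1)) := by
      simp [zeros, List.take_replicate]
    rw [heq, this, zeros_count_false, zeros_count_true]
    omega
  | cons i rest ih =>
    intro k h m
    obtain ⟨h1, h2, h3⟩ := h
    have hb : body k (i :: rest) = zeros (k + 1 - i) ++ true :: body i rest := rfl
    rw [hb, List.take_append]
    have hz : (zeros (k+1-i)).take m = zeros (min m (k+1-i)) := by
      simp [zeros, List.take_replicate]
    rw [hz]
    set m' := m - (zeros (k+1-i)).length with hm'
    simp only [List.count_append, zeros_count_false, zeros_count_true]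
    cases m' with
    | zero =>
      simp only [List.take_zero, List.count_nil]
      omega
    | succ m'' =>
      rw [List.take_succ_cons]
      have := ih h3 m''
      simp [List.count_cons]
      omega

def D (d : Nat) (u : List Bool) : Prop :=
  u.count false = u.count true + d ∧
  ∀ m, (u.take m).count false ≤ (u.take m).count true + d

lemma decB_headLe : ∀ (u : List Bool) (s : Nat) (i : Nat),
    (decB u s).head? = some i → i ≤ s := by
  intro u
  induction u with
  | nil => intro s i h; simp [decB] at h
  | cons b u ih =>
    intro s i h
    cases b with
    | false =>
      rw [decB] at h
      have := ih (s - 1) i h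
      omega
    | true =>
      rw [decB] at h
      simp at h
      omega

lemma body_succ_of_headLe {d : Nat} (hd : 1 ≤ d) (l : List Nat)
    (hh : ∀ i, l.head? = some i → i ≤ d + 1) :
    body (d + 1) l = false :: body d l := by
  cases l with
  | nil =>
    show zeros (d + 1 - 1) = false :: zeros (d - 1)
    have : d + 1 - 1 = (d - 1) + 1 := by omega
    rw [this, zeros_succ]
  | cons i rest =>
    have hi : i ≤ d + 1 := hh i rfl
    show zeros (d + 1 + 1 - i) ++ true :: body i rest
      = false :: (zeros (d + 1 - i) ++ true :: body i rest)
    have : d + 1 + 1 - i = (d + 1 - i) + 1 := by omega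
    rw [this, zeros_succ]
    rfl

lemma decB_main : ∀ (u : List Bool) (d : Nat), D d u →
    body (d + 1) (decB u (d + 2)) = u ∧ chain (d + 1) (decB u (d + 2)) ∧
      (decB u (d + 2)).length = u.count true := by
  intro u
  induction u with
  | nil =>
    intro d hD
    have hd0 : d = 0 := by
      have := hD.1; simp at this; omega
    subst hd0
    refine ⟨?_, trivial, by simp [decB]⟩
    show zeros 0 = ([] : List Bool)
    rfl
  | cons b u ih =>
    intro d hD
    obtain ⟨hc, hp⟩ := hD
    cases b with
    | false =>
      have hd1 : 1 ≤ d := by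
        have := hp 1
        simp [List.take_succ_cons, List.count_cons] at this
        omega
      have hD' : D (d - 1) u := by
        constructor
        · simp [List.count_cons] at hc; omega
        · intro m
          have := hp (m + 1)
          simp only [List.take_succ_cons, List.count_cons] at this
          simp at this
          omega
      have key := ih (d - 1) hD'
      have he : d - 1 + 2 = d + 1 := by omega
      rw [he] at key
      obtain ⟨k1, k2, k3⟩ := key
      have hstep : decB (false :: u) (d + 2) = decB u (d + 1) := by
        rfl
      have hb : body (d + 1) (decB u (d + 1)) = false :: body (d - 1 + 1) (decB u (d + 1)) := by
        have hd11 : d - 1 + 1 = d := by omega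
        rw [hd11]
        exact body_succ_of_headLe hd1 _ (fun i hi => by
          have := decB_headLe u (d + 1) i hi; omega)
      refine ⟨?_, ?_, ?_⟩
      · rw [hstep, hb, k1]
      · rw [hstep]; exact chain_mono k2 (by omega)
      · rw [hstep, k3]; simp [List.count_cons]
    | true =>
      have hD' : D (d + 1) u := by
        constructor
        · simp [List.count_cons] at hc; omega
        · intro m
          have := hp (m + 1)
          simp only [List.take_succ_cons, List.count_cons] at this
          simp at this
          omega
      have key := ih (d + 1) hD'
      obtain ⟨k1, k2, k3⟩ := key
      have hstep : decB (true :: u) (d + 2) = (d + 2) :: decB u (d + 3) := rfl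
      refine ⟨?_, ?_, ?_⟩
      · rw [hstep]
        show zeros (d + 1 + 1 - (d + 2)) ++ true :: body (d + 2) (decB u (d + 3)) = _
        have : d + 1 + 1 - (d + 2) = 0 := by omega
        rw [this]
        have h3 : d + 1 + 2 = d + 3 := by omega
        rw [h3] at k1
        rw [k1]
        rfl
      · rw [hstep]
        have h3 : d + 1 + 2 = d + 3 := by omega
        rw [h3] at k2
        exact ⟨by omega, by omega, k2⟩
      · rw [hstep]
        have h3 : d + 1 + 2 = d + 3 := by omega
        rw [h3] at k3
        simp [k3, List.count_cons]

lemma chain_of_idx : ∀ (l : List Nat) (k : Nat),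
    (∀ j, j + 1 < (k :: l).length →
      2 ≤ (k :: l).getD (j + 1) 0 ∧ (k :: l).getD (j + 1) 0 ≤ (k :: l).getD j 0 + 1) →
    chain k l := by
  intro l
  induction l with
  | nil => intro k _; trivial
  | cons i rest ih =>
    intro k h
    have h0 := h 0 (by simp)
    simp [List.getD] at h0
    refine ⟨h0.1, h0.2, ih i ?_⟩
    intro j hj
    have := h (j + 1) (by simp at hj ⊢; omega)
    simpa [List.getD] using this

lemma idx_of_chain : ∀ (l : List Nat) (k : Nat), chain k l →
    ∀ j, j + 1 < (k :: l).length →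
      2 ≤ (k :: l).getD (j + 1) 0 ∧ (k :: l).getD (j + 1) 0 ≤ (k :: l).getD j 0 + 1 := by
  intro l
  induction l with
  | nil => intro k _ j hj; simp at hj
  | cons i rest ih =>
    intro k h j hj
    obtain ⟨h1, h2, h3⟩ := h
    cases j with
    | zero => simpa [List.getD] using ⟨h1, h2⟩
    | succ j =>
      have := ih i h3 j (by simp at hj ⊢; omega)
      simpa [List.getD] using this

lemma treeWord_iff (w : List Nat) (hw : w ≠ []) :
    isTreeWord w ↔ ∃ l, w = 2 :: l ∧ chain 2 l := by
  constructor
  · rintro ⟨h1, h2⟩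
    cases w with
    | nil => exact absurd rfl hw
    | cons a l =>
      simp at h1
      subst h1
      exact ⟨l, rfl, chain_of_idx l 2 h2⟩
  · rintro ⟨l, rfl, hc⟩
    exact ⟨rfl, idx_of_chain l 2 hc⟩

/-- The encoding is a bijection from generating-tree words of length `n`
onto Dyck words of semilength `n`. -/
theorem stmt12 (n : Nat) (hn : 1 ≤ n) :
    Set.BijOn enc { w : List Nat | w.length = n ∧ isTreeWord w }
      { u : List Bool | u.length = 2 * n ∧ isDyck u } := by
  -- MapsTo enc
  have hmt : Set.MapsTo enc { w : List Nat | w.length = n ∧ isTreeWord w }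
      { u : List Bool | u.length = 2 * n ∧ isDyck u } := by
    rintro w ⟨hlen, htw⟩
    have hne : w ≠ [] := by intro h; subst h; simp at hlen; omega
    obtain ⟨l, rfl, hc⟩ := (treeWord_iff w hne).1 htw
    rw [Set.mem_setOf_eq, enc_cons]
    have hct := body_count_true hc
    have hcf := body_count_false hc
    have hlen2 : (body 2 l).length = 2 * l.length + 1 := by
      have := count_tf (body 2 l)
      omega
    constructor
    · simp at hlen
      simp [hlen2]
      omega
    · constructor
      · simp only [List.count_cons, List.count_nil]
        simp [hct, hcf, List.count_cons]
      · intro m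
        cases m with
        | zero => simp
        | succ m =>
          rw [List.take_succ_cons]
          have := body_prefix hc m
          simp [List.count_cons]
          omega
  -- MapsTo dec and inverse properties
  have hdec : ∀ u ∈ { u : List Bool | u.length = 2 * n ∧ isDyck u },
      (dec u).length = n ∧ isTreeWord (dec u) ∧ enc (dec u) = u := by
    rintro u ⟨hlen, hcnt, hpre⟩
    have hne : u ≠ [] := by intro h; subst h; simp at hlen; omega
    obtain ⟨b, u', rfl⟩ := List.exists_cons_of_ne_nil hne
    have hb : b = true := by
      by_contra h
      have hb' : b = false := by cases b <;> simp_all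
      subst hb'
      have := hpre 1
      simp [List.count_cons] at this
    subst hb
    have hD : D 1 u' := by
      constructor
      · simp [List.count_cons] at hcnt; omega
      · intro m
        have := hpre (m + 1)
        simp only [List.take_succ_cons, List.count_cons] at this
        simp at this
        omega
    have key := decB_main u' 1 hD
    obtain ⟨k1, k2, k3⟩ := key
    have hdecu : dec (true :: u') = 2 :: decB u' 3 := rfl
    have hn3 : (1:Nat) + 2 = 3 := rfl
    rw [hn3] at k1 k2 k3
    refine ⟨?_, ?_, ?_⟩
    · rw [hdecu]
      simp only [List.length_cons, k3]
      -- u'.count true + 1 = n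
      have hlen' : u'.length = 2 * n - 1 := by simp at hlen; omega
      have hcnt' : u'.count false = u'.count true + 1 := hD.1
      have := count_tf u'
      omega
    · rw [hdecu]
      exact (treeWord_iff _ (by simp)).2 ⟨_, rfl, k2⟩
    · rw [hdecu, enc_cons, k1]
  refine Set.InvOn.bijOn (f' := dec) ⟨?_, ?_⟩ hmt ?_
  · -- LeftInvOn : ∀ w ∈ S, dec (enc w) = w
    rintro w ⟨hlen, htw⟩
    have hne : w ≠ [] := by intro h; subst h; simp at hlen; omega
    obtain ⟨l, rfl, hc⟩ := (treeWord_iff w hne).1 htw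
    rw [enc_cons]
    show dec (true :: body 2 l) = 2 :: l
    rw [dec]
    congr 1
    have := decB_body hc
    simpa using this
  · -- RightInvOn : ∀ u ∈ T, enc (dec u) = u
    intro u hu
    exact (hdec u hu).2.2
  · -- MapsTo dec
    intro u hu
    exact ⟨(hdec u hu).1, (hdec u hu).2.1⟩
end
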